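/- arXiv:2505.08963 — 3 statements merged into one kernel-verified Lean document; each statement's English description precedes it below -/
import Mathlib

section
/- Let R be a linear subspace of a Hilbert space V and w ∈ V. Then the function v ↦ ‖w − v‖ attains its infimum over R if and only if w ∈ R + R^⊥ (where R^⊥ is the orthogonal complement of R). -/
/-- `v ↦ ‖w − v‖` attains its infimum over a (not necessarily closed)
subspace `R` iff `w ∈ R + R^⊥`. -/
theorem stmt_3 {V : Type*} [NormedAddCommGroup V] [InnerProductSpace ℝ V] [CompleteSpace V]
    (R : Submodule ℝ V) (w : V) :
    (∃ v ∈ R, ∀ r ∈ R, ‖w - v‖ ≤ ‖w - r‖) ↔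
      (∃ r ∈ R, ∃ p ∈ Rᗮ, w = r + p) := by
  constructor
  · rintro ⟨v, hv, hmin⟩
    have hinf : ‖w - v‖ = ⨅ r : R, ‖w - r‖ := by
      refine le_antisymm (le_ciInf fun r => hmin r r.2) ?_
      exact ciInf_le ⟨0, fun x ⟨r, hr⟩ => hr ▸ norm_nonneg _⟩ (⟨v, hv⟩ : R)
    have horth := (Submodule.norm_eq_iInf_iff_real_inner_eq_zero R hv).mp hinf
    refine ⟨v, hv, w - v, ?_, by abel⟩
    intro r hr
    rw [real_inner_comm]
    exact horth r hr
  · rintro ⟨r, hr, p, hp, rfl⟩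
    refine ⟨r, hr, fun r' hr' => ?_⟩
    have h1 : r + p - r = p := by abel
    have h2 : r + p - r' = p + (r - r') := by abel
    rw [h1, h2]
    have hperp : (inner ℝ p (r - r') : ℝ) = 0 := by rw [real_inner_comm]; exact hp _ (R.sub_mem hr hr')
    have := norm_add_sq_real p (r - r')
    nlinarith [norm_nonneg (p + (r - r')), norm_nonneg p, sq_nonneg ‖r - r'‖]
end

section
/- Let Q : U → V be a bounded linear operator between Hilbert spaces. Then the set of least-squares solutions U_{Q,w} := {u* ∈ U : ‖w − Qu*‖ = inf_{u∈U} ‖w − Qu‖} is nonempty for every w ∈ V if and only if the range of Q is closed in V. -/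
/-- least-squares solutions of `Qu = w` exist for every `w` iff
the range of `Q` is closed. -/
theorem stmt_4 {U V : Type*} [NormedAddCommGroup U] [InnerProductSpace ℝ U] [CompleteSpace U]
    [NormedAddCommGroup V] [InnerProductSpace ℝ V] [CompleteSpace V]
    (Q : U →L[ℝ] V) :
    (∀ w : V, ∃ ustar : U, ∀ u : U, ‖w - Q ustar‖ ≤ ‖w - Q u‖) ↔
      IsClosed (Set.range Q) := by
  constructor
  · intro h
    apply isClosed_of_closure_subset
    intro w hw
    obtain ⟨ustar, hmin⟩ := h w
    have h0 : ‖w - Q ustar‖ = 0 := by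
      by_contra hne
      have hpos : 0 < ‖w - Q ustar‖ := lt_of_le_of_ne (norm_nonneg _) (Ne.symm hne)
      obtain ⟨b, ⟨u, rfl⟩, hb⟩ := Metric.mem_closure_iff.mp hw _ hpos
      rw [dist_eq_norm] at hb
      exact absurd (hmin u) (by linarith)
    have : w = Q ustar := by
      have := norm_eq_zero.mp h0
      rwa [sub_eq_zero] at this
    exact ⟨ustar, this.symm⟩
  · intro hcl w
    set K : Submodule ℝ V := LinearMap.range (Q : U →ₗ[ℝ] V) with hKdef
    have hKset : (K : Set V) = Set.range Q := by
      ext x; simp [hKdef, LinearMap.mem_range]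
    have hK : IsComplete (K : Set V) := by
      rw [hKset]; exact hcl.isComplete
    obtain ⟨v, hvK, hmin⟩ := Submodule.exists_norm_eq_iInf_of_complete_subspace K hK w
    obtain ⟨ustar, rfl⟩ := LinearMap.mem_range.mp hvK
    refine ⟨ustar, fun u => ?_⟩
    rw [show ‖w - Q ustar‖ = _ from hmin]
    have hbdd : BddBelow (Set.range fun x : K => ‖w - (x : V)‖) :=
      ⟨0, by rintro _ ⟨x, rfl⟩; exact norm_nonneg _⟩
    exact ciInf_le hbdd ⟨Q u, LinearMap.mem_range.mpr ⟨u, rfl⟩⟩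
end

section
/- Let P_B denote convolution with sinc (the orthogonal projection from L²(ℝ) onto the space B of functions bandlimited to [−1/2, 1/2]), and let φ(t) := ∫₀ᵗ (t−τ) sinc(τ) dτ. Then for all real a ≤ b and c ≤ d, ⟨P_B 1_{[a,b]}, 1_{[c,d]}⟩_{L²} = φ(d−a) − φ(d−b) − φ(c−a) + φ(c−b). -/
open intervalIntegral MeasureTheory Filter Topology

/-- normalized sinc: `sinc τ = sin(πτ)/(πτ)`, `sinc 0 = 1`. -/
noncomputable def sinc (τ : ℝ) : ℝ :=
  if τ = 0 then 1 else Real.sin (Real.pi * τ) / (Real.pi * τ)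

/-- `φ(t) := ∫₀ᵗ (t−τ) sinc τ dτ`. -/
noncomputable def phi (t : ℝ) : ℝ := ∫ τ in (0:ℝ)..t, (t - τ) * sinc τ

lemma continuous_sinc : Continuous sinc := by
  rw [continuous_iff_continuousAt]
  intro x
  rcases eq_or_ne x 0 with rfl | hx
  · have hslope : Tendsto (fun y : ℝ => Real.sin y / y) (𝓝[≠] 0) (𝓝 1) := by
      have h := Real.hasDerivAt_sin 0
      rw [hasDerivAt_iff_tendsto_slope] at h
      rw [Real.cos_zero] at h
      refine h.congr fun y => ?_
      simp [slope_fun_def, div_eq_inv_mul]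
    have hmap : Tendsto (fun y : ℝ => Real.pi * y) (𝓝[≠] (0:ℝ)) (𝓝[≠] (0:ℝ)) := by
      rw [tendsto_nhdsWithin_iff]
      constructor
      · have : Tendsto (fun y : ℝ => Real.pi * y) (𝓝 0) (𝓝 (Real.pi * 0)) :=
          (continuous_const.mul continuous_id).tendsto 0
        simpa using this.mono_left nhdsWithin_le_nhds
      · filter_upwards [eventually_mem_nhdsWithin] with y hy
        simp only [Set.mem_compl_iff, Set.mem_singleton_iff] at hy ⊢
        exact mul_ne_zero Real.pi_ne_zero hy
    have htail : Tendsto sinc (𝓝[≠] (0:ℝ)) (𝓝 1) := by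
      have h2 : Tendsto (fun y : ℝ => Real.sin (Real.pi * y) / (Real.pi * y))
          (𝓝[≠] (0:ℝ)) (𝓝 1) := hslope.comp hmap
      refine h2.congr' ?_
      filter_upwards [eventually_mem_nhdsWithin] with y hy
      simp only [Set.mem_compl_iff, Set.mem_singleton_iff] at hy
      simp [sinc, hy]
    have h0 : sinc 0 = 1 := by simp [sinc]
    rw [ContinuousAt, h0, ← nhdsNE_sup_pure (0:ℝ), tendsto_sup]
    exact ⟨htail, by simpa [h0] using tendsto_pure_nhds sinc 0⟩
  · have h : ContinuousAt (fun y : ℝ => Real.sin (Real.pi * y) / (Real.pi * y)) x := by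
      apply ContinuousAt.div
      · fun_prop
      · fun_prop
      · exact mul_ne_zero Real.pi_ne_zero hx
    refine h.congr ?_
    filter_upwards [isOpen_compl_singleton.mem_nhds hx] with y hy
    simp only [Set.mem_compl_iff, Set.mem_singleton_iff] at hy
    simp [sinc, hy]

/-- the primitive of `sinc`. -/
noncomputable def Ssinc (t : ℝ) : ℝ := ∫ τ in (0:ℝ)..t, sinc τ

lemma hasDerivAt_Ssinc (x : ℝ) : HasDerivAt Ssinc (sinc x) x :=
  intervalIntegral.integral_hasDerivAt_right
    (continuous_sinc.intervalIntegrable _ _)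
    (continuous_sinc.stronglyMeasurableAtFilter _ _)
    continuous_sinc.continuousAt

lemma continuous_Ssinc : Continuous Ssinc :=
  Differentiable.continuous fun x => (hasDerivAt_Ssinc x).differentiableAt

lemma phi_eq (t : ℝ) : phi t = t * Ssinc t - ∫ τ in (0:ℝ)..t, τ * sinc τ := by
  unfold phi Ssinc
  rw [← intervalIntegral.integral_const_mul, ← intervalIntegral.integral_sub (f := fun τ => t * sinc τ) (g := fun τ => τ * sinc τ)
    ((continuous_const.mul continuous_sinc).intervalIntegrable _ _)
    ((continuous_id'.mul continuous_sinc).intervalIntegrable _ _)]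
  congr 1
  ext τ
  ring

lemma hasDerivAt_phi (x : ℝ) : HasDerivAt phi (Ssinc x) x := by
  have h1 : HasDerivAt (fun t : ℝ => t * Ssinc t) (1 * Ssinc x + x * sinc x) x :=
    (hasDerivAt_id x).mul (hasDerivAt_Ssinc x)
  have h2 : HasDerivAt (fun t : ℝ => ∫ τ in (0:ℝ)..t, τ * sinc τ) (x * sinc x) x :=
    intervalIntegral.integral_hasDerivAt_right
      ((continuous_id'.mul continuous_sinc).intervalIntegrable _ _)
      ((continuous_id'.mul continuous_sinc).stronglyMeasurableAtFilter _ _)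
      (continuous_id'.mul continuous_sinc).continuousAt
  have h3 : HasDerivAt (fun t : ℝ => t * Ssinc t - ∫ τ in (0:ℝ)..t, τ * sinc τ)
      (1 * Ssinc x + x * sinc x - x * sinc x) x := h1.sub h2
  have heq : (fun t : ℝ => t * Ssinc t - ∫ τ in (0:ℝ)..t, τ * sinc τ) = phi := by
    ext t; rw [phi_eq]
  rw [heq] at h3
  convert h3 using 1
  ring

lemma phi_eq_integral_Ssinc (t : ℝ) : phi t = ∫ u in (0:ℝ)..t, Ssinc u := by
  set F : ℝ → ℝ := fun t => phi t - ∫ u in (0:ℝ)..t, Ssinc u with hF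
  have hD : ∀ x, HasDerivAt F 0 x := by
    intro x
    have h2 : HasDerivAt (fun t : ℝ => ∫ u in (0:ℝ)..t, Ssinc u) (Ssinc x) x :=
      intervalIntegral.integral_hasDerivAt_right
        (continuous_Ssinc.intervalIntegrable _ _)
        (continuous_Ssinc.stronglyMeasurableAtFilter _ _)
        continuous_Ssinc.continuousAt
    have h3 : HasDerivAt F (Ssinc x - Ssinc x) x := (hasDerivAt_phi x).sub h2
    simpa using h3
  have hconst : F t = F 0 :=
    is_const_of_deriv_eq_zero (fun x => (hD x).differentiableAt)
      (fun x => (hD x).deriv) t 0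
  have hF0 : F 0 = 0 := by simp [hF, phi]
  have := hconst.trans hF0
  simp only [hF] at this
  linarith

lemma inner_eq (a b s : ℝ) (hab : a ≤ b) :
    (∫ τ : ℝ, sinc τ * Set.indicator (Set.Icc a b) (fun _ => (1:ℝ)) (s - τ)) =
      Ssinc (s - a) - Ssinc (s - b) := by
  have hcong : (fun τ : ℝ => sinc τ * Set.indicator (Set.Icc a b) (fun _ => (1:ℝ)) (s - τ)) =
      Set.indicator (Set.Icc (s - b) (s - a)) sinc := by
    ext τ
    by_cases h : s - τ ∈ Set.Icc a b
    · rw [Set.indicator_of_mem h, Set.indicator_of_mem, mul_one]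
      exact ⟨by linarith [h.2], by linarith [h.1]⟩
    · rw [Set.indicator_of_notMem h, Set.indicator_of_notMem, mul_zero]
      intro hc
      exact h ⟨by linarith [hc.2], by linarith [hc.1]⟩
  rw [hcong, MeasureTheory.integral_indicator measurableSet_Icc,
    MeasureTheory.integral_Icc_eq_integral_Ioc,
    ← intervalIntegral.integral_of_le (by linarith : s - b ≤ s - a)]
  rw [← intervalIntegral.integral_interval_sub_left
    (continuous_sinc.intervalIntegrable _ _) (continuous_sinc.intervalIntegrable _ _)]
  rfl

/-- with `P_B f = sinc * f` (bandlimiting projection) and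
`1_{[a,b]}` indicator functions,
`⟨P_B 1_{[a,b]}, 1_{[c,d]}⟩ = φ(d−a) − φ(d−b) − φ(c−a) + φ(c−b)`. -/
theorem stmt_17 (a b c d : ℝ) (hab : a ≤ b) (hcd : c ≤ d) :
    ∫ s in c..d, (∫ τ : ℝ, sinc τ * Set.indicator (Set.Icc a b) (fun _ => (1:ℝ)) (s - τ)) =
      phi (d - a) - phi (d - b) - phi (c - a) + phi (c - b) := by
  have h1 : ∫ s in c..d,
      (∫ τ : ℝ, sinc τ * Set.indicator (Set.Icc a b) (fun _ => (1:ℝ)) (s - τ)) =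
      ∫ s in c..d, (Ssinc (s - a) - Ssinc (s - b)) := by
    apply intervalIntegral.integral_congr
    intro s _
    exact inner_eq a b s hab
  have hia : IntervalIntegrable (fun s => Ssinc (s - a)) volume c d :=
    (continuous_Ssinc.comp (continuous_sub_right a)).intervalIntegrable _ _
  have hib : IntervalIntegrable (fun s => Ssinc (s - b)) volume c d :=
    (continuous_Ssinc.comp (continuous_sub_right b)).intervalIntegrable _ _
  rw [h1, intervalIntegral.integral_sub hia hib,
    intervalIntegral.integral_comp_sub_right (fun s => Ssinc s) a,
    intervalIntegral.integral_comp_sub_right (fun s => Ssinc s) b,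
    ← intervalIntegral.integral_interval_sub_left
      (continuous_Ssinc.intervalIntegrable (0:ℝ) (d - a))
      (continuous_Ssinc.intervalIntegrable (0:ℝ) (c - a)),
    ← intervalIntegral.integral_interval_sub_left
      (continuous_Ssinc.intervalIntegrable (0:ℝ) (d - b))
      (continuous_Ssinc.intervalIntegrable (0:ℝ) (c - b))]
  simp only [phi_eq_integral_Ssinc]
  ring
end
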